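/- Let Ω ⊆ ℂ be open, let p : Ω → ℝ be a nonnegative measurable weight (e.g. subharmonic), let n ≥ 1, and let f : Ω → ℂ be polyanalytic of order n on Ω such that ∫_Ω |∂̄^k f(z)|² e^{-p(z)} dλ(z) < ∞ for every k = 0, 1, ..., n−1. Then the function u(z) := −Σ_{k=1}^{n} ((−1)^k / k!) z̄^k ∂̄^{k−1}f(z) solves ∂̄u = f on Ω, and it satisfies the estimate ∫_Ω |u(z)|²/(1+|z|²)^{2n} e^{-p(z)} dλ(z) ≤ n Σ_{k=1}^{n} ∫_Ω |∂̄^{k−1} f(z)|² e^{-p(z)} dλ(z). -/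

import Mathlib

open MeasureTheory

/-- The Wirtinger (Cauchy–Riemann) operator `∂̄u(z) = (1/2)(∂u/∂x + i ∂u/∂y)`. -/
noncomputable def dbar (u : ℂ → ℂ) (z : ℂ) : ℂ :=
  (1 / 2) * (fderiv ℝ u z 1 + Complex.I * fderiv ℝ u z Complex.I)

lemma dbar_neg (u : ℂ → ℂ) (z : ℂ) : dbar (fun w => -u w) z = - dbar u z := by
  simp only [dbar, fderiv_fun_neg, ContinuousLinearMap.neg_apply]
  ring

lemma dbar_sum {ι : Type*} (s : Finset ι) (F : ι → ℂ → ℂ) (z : ℂ)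
    (h : ∀ i ∈ s, DifferentiableAt ℝ (F i) z) :
    dbar (fun w => ∑ i ∈ s, F i w) z = ∑ i ∈ s, dbar (F i) z := by
  simp only [dbar, fderiv_fun_sum h, ContinuousLinearMap.sum_apply, Finset.mul_sum,
    Finset.sum_add_distrib, mul_add]

lemma dbar_const_mul (c : ℂ) (u : ℂ → ℂ) (z : ℂ) (hu : DifferentiableAt ℝ u z) :
    dbar (fun w => c * u w) z = c * dbar u z := by
  simp only [dbar, fderiv_const_mul hu c, ContinuousLinearMap.smul_apply, smul_eq_mul]
  ring

lemma hasFDerivAt_conj_pow (k : ℕ) (z : ℂ) :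
    HasFDerivAt (fun w => (starRingEnd ℂ) w ^ k)
      (((ContinuousLinearMap.smulRight (1 : ℂ →L[ℂ] ℂ)
        ((k : ℂ) * (starRingEnd ℂ) z ^ (k - 1))).restrictScalars ℝ).comp
        ((Complex.conjCLE : ℂ ≃L[ℝ] ℂ) : ℂ →L[ℝ] ℂ)) z := by
  have hconj : HasFDerivAt (fun w => (starRingEnd ℂ) w)
      ((Complex.conjCLE : ℂ ≃L[ℝ] ℂ) : ℂ →L[ℝ] ℂ) z := by
    have := Complex.conjCLE.hasFDerivAt (x := z)
    exact this.congr_of_eventuallyEq (Filter.Eventually.of_forall fun w => rfl)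
  have hpow : HasFDerivAt (fun t : ℂ => t ^ k)
      ((ContinuousLinearMap.smulRight (1 : ℂ →L[ℂ] ℂ)
        ((k : ℂ) * (starRingEnd ℂ) z ^ (k - 1))).restrictScalars ℝ) ((starRingEnd ℂ) z) :=
    ((hasDerivAt_pow k ((starRingEnd ℂ) z)).hasFDerivAt).restrictScalars ℝ
  exact hpow.comp z hconj

lemma differentiableAt_conj_pow_mul (k : ℕ) {g : ℂ → ℂ} {z : ℂ}
    (hg : DifferentiableAt ℝ g z) :
    DifferentiableAt ℝ (fun w => (starRingEnd ℂ) w ^ k * g w) z :=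
  ((hasFDerivAt_conj_pow k z).differentiableAt).mul hg

lemma dbar_conj_pow_mul (k : ℕ) {g : ℂ → ℂ} {z : ℂ} (hg : DifferentiableAt ℝ g z) :
    dbar (fun w => (starRingEnd ℂ) w ^ k * g w) z
      = (k : ℂ) * (starRingEnd ℂ) z ^ (k - 1) * g z + (starRingEnd ℂ) z ^ k * dbar g z := by
  have hmul : HasFDerivAt (fun w => (starRingEnd ℂ) w ^ k * g w) _ z :=
    (hasFDerivAt_conj_pow k z).mul hg.hasFDerivAt
  rw [dbar, hmul.fderiv]
  rw [dbar, (hg.hasFDerivAt).fderiv]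
  simp only [ContinuousLinearMap.add_apply, ContinuousLinearMap.smul_apply,
    ContinuousLinearMap.coe_comp', Function.comp_apply,
    ContinuousLinearMap.coe_restrictScalars', ContinuousLinearMap.smulRight_apply,
    ContinuousLinearMap.one_apply, ContinuousLinearEquiv.coe_coe, Complex.conjCLE_apply,
    smul_eq_mul, map_one, Complex.conj_I]
  ring_nf
  simp [Complex.I_sq]
  ring

lemma contDiffOn_dbar_iterate {f : ℂ → ℂ} {Ω : Set ℂ} (hΩ : IsOpen Ω) {n : ℕ}
    (hf : ContDiffOn ℝ n f Ω) :
    ∀ j, j ≤ n → ContDiffOn ℝ ((n - j : ℕ) : ℕ∞) (dbar^[j] f) Ω := by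
  intro j
  induction j with
  | zero => intro _; simpa using hf
  | succ j ih =>
    intro hj
    have h1 : ContDiffOn ℝ ((n - j : ℕ) : ℕ∞) (dbar^[j] f) Ω := ih (Nat.le_of_succ_le hj)
    have hstep : (n - j) = (n - (j + 1)) + 1 := by omega
    have h2 : ContDiffOn ℝ ((n - (j + 1) : ℕ) : ℕ∞) (fderiv ℝ (dbar^[j] f)) Ω := by
      apply h1.fderiv_of_isOpen hΩ
      rw [hstep]
      norm_cast
    rw [Function.iterate_succ_apply']
    have hd : dbar (dbar^[j] f) = fun z => (1 / 2 : ℂ) *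
        ((fderiv ℝ (dbar^[j] f) z) 1 + Complex.I * (fderiv ℝ (dbar^[j] f) z) Complex.I) := rfl
    rw [hd]
    apply ContDiffOn.mul contDiffOn_const
    apply ContDiffOn.add
    · exact (ContinuousLinearMap.apply ℝ ℂ (1 : ℂ)).contDiff.comp_contDiffOn h2
    · exact contDiffOn_const.mul
        ((ContinuousLinearMap.apply ℝ ℂ Complex.I).contDiff.comp_contDiffOn h2)

lemma differentiableAt_dbar_iterate {f : ℂ → ℂ} {Ω : Set ℂ} (hΩ : IsOpen Ω) {n : ℕ}
    (hf : ContDiffOn ℝ n f Ω) {j : ℕ} (hj : j < n) {z : ℂ} (hz : z ∈ Ω) :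
    DifferentiableAt ℝ (dbar^[j] f) z := by
  have h := contDiffOn_dbar_iterate hΩ hf j hj.le
  have h1 : (1 : WithTop ℕ∞) ≤ ((n - j : ℕ) : WithTop ℕ∞) := by
    have : 1 ≤ n - j := by omega
    exact_mod_cast this
  exact (h.differentiableOn (zero_lt_one.trans_le h1).ne').differentiableAt (hΩ.mem_nhds hz)

lemma telescope_Icc (a : ℕ → ℂ) (n : ℕ) :
    ∑ k ∈ Finset.Icc 1 n, (a k - a (k - 1)) = a n - a 0 := by
  rw [← Finset.Ico_add_one_right_eq_Icc, Finset.sum_Ico_eq_sum_range]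
  rw [show n + 1 - 1 = n from rfl]
  have : ∀ i ∈ Finset.range n, a (1 + i) - a (1 + i - 1) = a (i + 1) - a i := by
    intro i _
    congr 1 <;> congr 1 <;> omega
  rw [Finset.sum_congr rfl this, Finset.sum_range_sub]

lemma dbar_term (c : ℂ) (k : ℕ) {g : ℂ → ℂ} {z : ℂ} (hg : DifferentiableAt ℝ g z) :
    dbar (fun w => c * (starRingEnd ℂ) w ^ k * g w) z
      = c * ((k : ℂ) * (starRingEnd ℂ) z ^ (k - 1) * g z
          + (starRingEnd ℂ) z ^ k * dbar g z) := by
  have he : (fun w => c * (starRingEnd ℂ) w ^ k * g w)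
      = fun w => c * ((starRingEnd ℂ) w ^ k * g w) := by
    funext w; ring
  rw [he, dbar_const_mul c _ z (differentiableAt_conj_pow_mul k hg), dbar_conj_pow_mul k hg]

lemma part1 (Ω : Set ℂ) (hΩ : IsOpen Ω) (n : ℕ) (hn : 1 ≤ n) (f : ℂ → ℂ)
    (hreg : ContDiffOn ℝ n f Ω) (hpoly : ∀ z ∈ Ω, dbar^[n] f z = 0) :
    ∀ z ∈ Ω,
      dbar (fun w => -∑ k ∈ Finset.Icc 1 n,
        ((-1) ^ k / (k.factorial : ℂ)) * (starRingEnd ℂ) w ^ k * dbar^[k - 1] f w) z = f z := by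
  intro z hz
  set F : ℕ → ℂ → ℂ := fun k w =>
    ((-1) ^ k / (k.factorial : ℂ)) * (starRingEnd ℂ) w ^ k * dbar^[k - 1] f w with hF
  have hdiff : ∀ k ∈ Finset.Icc 1 n, DifferentiableAt ℝ (F k) z := by
    intro k hk
    rw [Finset.mem_Icc] at hk
    have hg : DifferentiableAt ℝ (dbar^[k - 1] f) z :=
      differentiableAt_dbar_iterate hΩ hreg (by omega) hz
    exact ((differentiableAt_const _).mul
      (hasFDerivAt_conj_pow k z).differentiableAt).mul hg
  have h1 : dbar (fun w => -∑ k ∈ Finset.Icc 1 n, F k w) z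
      = -dbar (fun w => ∑ k ∈ Finset.Icc 1 n, F k w) z :=
    dbar_neg (fun w => ∑ k ∈ Finset.Icc 1 n, F k w) z
  rw [h1, dbar_sum (Finset.Icc 1 n) F z hdiff]
  set a : ℕ → ℂ := fun j =>
    ((-1) ^ j / (j.factorial : ℂ)) * (starRingEnd ℂ) z ^ j * dbar^[j] f z with ha
  have hterm : ∀ k ∈ Finset.Icc 1 n, dbar (F k) z = a k - a (k - 1) := by
    intro k hk
    rw [Finset.mem_Icc] at hk
    have hg : DifferentiableAt ℝ (dbar^[k - 1] f) z :=
      differentiableAt_dbar_iterate hΩ hreg (by omega) hz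
    have hFk : dbar (F k) z = ((-1) ^ k / (k.factorial : ℂ)) *
        ((k : ℂ) * (starRingEnd ℂ) z ^ (k - 1) * dbar^[k - 1] f z
          + (starRingEnd ℂ) z ^ k * dbar (dbar^[k - 1] f) z) :=
      dbar_term _ k hg
    have hk1 : k - 1 + 1 = k := by omega
    have hiter : dbar (dbar^[k - 1] f) z = dbar^[k] f z := by
      conv_rhs => rw [← hk1, Function.iterate_succ_apply']
    have hfac : (k.factorial : ℂ) = (k : ℂ) * ((k - 1).factorial : ℂ) := by
      rw [← hk1, Nat.factorial_succ]
      push_cast [hk1]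
      ring
    have hsign : ((-1 : ℂ)) ^ k = -((-1 : ℂ)) ^ (k - 1) := by
      nth_rewrite 1 [← hk1]
      rw [pow_succ]
      ring
    have hne : ((k - 1).factorial : ℂ) ≠ 0 :=
      Nat.cast_ne_zero.mpr (Nat.factorial_ne_zero _)
    have hkne : (k : ℂ) ≠ 0 := Nat.cast_ne_zero.mpr (by omega)
    rw [hFk, hiter, ha]
    simp only
    rw [hfac, hsign]
    field_simp
    ring
  rw [Finset.sum_congr rfl hterm, telescope_Icc]
  have han : a n = 0 := by
    simp [ha, hpoly z hz]
  have ha0 : a 0 = f z := by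
    simp [ha]
  rw [han, ha0]
  ring

lemma pointwise_bound (n : ℕ) (hn : 1 ≤ n) (f : ℂ → ℂ) (p : ℂ → ℝ) (z : ℂ) :
    ‖-∑ k ∈ Finset.Icc 1 n,
        ((-1) ^ k / (k.factorial : ℂ)) * (starRingEnd ℂ) z ^ k * dbar^[k - 1] f z‖ ^ 2 /
      (1 + ‖z‖ ^ 2) ^ (2 * n) * Real.exp (-(p z))
      ≤ (n : ℝ) * ∑ k ∈ Finset.Icc 1 n, ‖dbar^[k - 1] f z‖ ^ 2 * Real.exp (-(p z)) := by
  set D : ℝ := (1 + ‖z‖ ^ 2) ^ (2 * n) with hDdef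
  have hb1 : (1 : ℝ) ≤ 1 + ‖z‖ ^ 2 := by nlinarith [sq_nonneg ‖z‖]
  have hD1 : (1 : ℝ) ≤ D := one_le_pow₀ hb1
  have hD0 : (0 : ℝ) < D := lt_of_lt_of_le one_pos hD1
  set E : ℝ := Real.exp (-(p z)) with hEdef
  have hE : (0 : ℝ) ≤ E := Real.exp_nonneg _
  set S : ℂ := ∑ k ∈ Finset.Icc 1 n,
      ((-1) ^ k / (k.factorial : ℂ)) * (starRingEnd ℂ) z ^ k * dbar^[k - 1] f z with hS
  have h1 : ‖-S‖ ≤ ∑ k ∈ Finset.Icc 1 n,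
      ‖((-1 : ℂ)) ^ k / (k.factorial : ℂ) * (starRingEnd ℂ) z ^ k * dbar^[k - 1] f z‖ := by
    rw [norm_neg]
    exact norm_sum_le _ _
  have h2 : ‖-S‖ ^ 2 ≤ (n : ℝ) * ∑ k ∈ Finset.Icc 1 n,
      ‖((-1 : ℂ)) ^ k / (k.factorial : ℂ) * (starRingEnd ℂ) z ^ k * dbar^[k - 1] f z‖ ^ 2 := by
    calc ‖-S‖ ^ 2 ≤ (∑ k ∈ Finset.Icc 1 n,
        ‖((-1 : ℂ)) ^ k / (k.factorial : ℂ) * (starRingEnd ℂ) z ^ k * dbar^[k - 1] f z‖) ^ 2 :=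
          pow_le_pow_left₀ (norm_nonneg _) h1 2
      _ ≤ ((Finset.Icc 1 n).card : ℝ) * ∑ k ∈ Finset.Icc 1 n,
        ‖((-1 : ℂ)) ^ k / (k.factorial : ℂ) * (starRingEnd ℂ) z ^ k * dbar^[k - 1] f z‖ ^ 2 :=
          sq_sum_le_card_mul_sum_sq
      _ = (n : ℝ) * _ := by rw [Nat.card_Icc]; norm_num
  have h3 : ∀ k ∈ Finset.Icc 1 n,
      ‖((-1 : ℂ)) ^ k / (k.factorial : ℂ) * (starRingEnd ℂ) z ^ k * dbar^[k - 1] f z‖ ^ 2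
        ≤ D * ‖dbar^[k - 1] f z‖ ^ 2 := by
    intro k hk
    rw [Finset.mem_Icc] at hk
    have hnorm : ‖((-1 : ℂ)) ^ k / (k.factorial : ℂ) * (starRingEnd ℂ) z ^ k * dbar^[k - 1] f z‖
        ≤ ‖z‖ ^ k * ‖dbar^[k - 1] f z‖ := by
      rw [norm_mul, norm_mul, norm_pow, RCLike.norm_conj]
      have hc : ‖((-1 : ℂ)) ^ k / (k.factorial : ℂ)‖ ≤ 1 := by
        rw [norm_div, norm_pow, norm_neg, norm_one, one_pow]
        rw [div_le_one (by
          have := Nat.factorial_pos k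
          exact_mod_cast Nat.cast_pos.mpr this)]
        simp only [Complex.norm_natCast]
        exact_mod_cast Nat.one_le_iff_ne_zero.mpr (Nat.factorial_ne_zero k)
      calc ‖((-1 : ℂ)) ^ k / (k.factorial : ℂ)‖ * ‖z‖ ^ k * ‖dbar^[k - 1] f z‖
          ≤ 1 * ‖z‖ ^ k * ‖dbar^[k - 1] f z‖ := by
            apply mul_le_mul_of_nonneg_right _ (norm_nonneg _)
            exact mul_le_mul_of_nonneg_right hc (by positivity)
        _ = ‖z‖ ^ k * ‖dbar^[k - 1] f z‖ := by ring
    have hpow : (‖z‖ ^ k) ^ 2 ≤ D := by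
      have : (‖z‖ ^ k) ^ 2 = (‖z‖ ^ 2) ^ k := by ring
      rw [this, hDdef]
      calc (‖z‖ ^ 2) ^ k ≤ (1 + ‖z‖ ^ 2) ^ k :=
            pow_le_pow_left₀ (by positivity) (by linarith) k
        _ ≤ (1 + ‖z‖ ^ 2) ^ (2 * n) := pow_le_pow_right₀ hb1 (by omega)
    calc ‖((-1 : ℂ)) ^ k / (k.factorial : ℂ) * (starRingEnd ℂ) z ^ k * dbar^[k - 1] f z‖ ^ 2
        ≤ (‖z‖ ^ k * ‖dbar^[k - 1] f z‖) ^ 2 := pow_le_pow_left₀ (norm_nonneg _) hnorm 2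
      _ = (‖z‖ ^ k) ^ 2 * ‖dbar^[k - 1] f z‖ ^ 2 := by ring
      _ ≤ D * ‖dbar^[k - 1] f z‖ ^ 2 :=
          mul_le_mul_of_nonneg_right hpow (by positivity)
  have h4 : ‖-S‖ ^ 2 ≤ D * ((n : ℝ) * ∑ k ∈ Finset.Icc 1 n, ‖dbar^[k - 1] f z‖ ^ 2) := by
    calc ‖-S‖ ^ 2 ≤ (n : ℝ) * ∑ k ∈ Finset.Icc 1 n,
        ‖((-1 : ℂ)) ^ k / (k.factorial : ℂ) * (starRingEnd ℂ) z ^ k * dbar^[k - 1] f z‖ ^ 2 := h2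
      _ ≤ (n : ℝ) * ∑ k ∈ Finset.Icc 1 n, D * ‖dbar^[k - 1] f z‖ ^ 2 := by
          apply mul_le_mul_of_nonneg_left (Finset.sum_le_sum h3) (by positivity)
      _ = D * ((n : ℝ) * ∑ k ∈ Finset.Icc 1 n, ‖dbar^[k - 1] f z‖ ^ 2) := by
          rw [← Finset.mul_sum]; ring
  have h5 : ‖-S‖ ^ 2 / D ≤ (n : ℝ) * ∑ k ∈ Finset.Icc 1 n, ‖dbar^[k - 1] f z‖ ^ 2 := by
    rw [div_le_iff₀ hD0]
    linarith [h4]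
  calc ‖-S‖ ^ 2 / D * E ≤ ((n : ℝ) * ∑ k ∈ Finset.Icc 1 n, ‖dbar^[k - 1] f z‖ ^ 2) * E :=
        mul_le_mul_of_nonneg_right h5 hE
    _ = (n : ℝ) * ∑ k ∈ Finset.Icc 1 n, ‖dbar^[k - 1] f z‖ ^ 2 * E := by
        rw [mul_assoc, Finset.sum_mul]

theorem stmt_8 (Ω : Set ℂ) (hΩ : IsOpen Ω) (p : ℂ → ℝ) (hpm : Measurable p)
    (hp0 : ∀ z ∈ Ω, 0 ≤ p z) (n : ℕ) (hn : 1 ≤ n) (f : ℂ → ℂ)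
    (hreg : ContDiffOn ℝ n f Ω) (hpoly : ∀ z ∈ Ω, dbar^[n] f z = 0)
    (hint : ∀ k < n, IntegrableOn (fun z => ‖dbar^[k] f z‖ ^ 2 * Real.exp (-(p z))) Ω) :
    (∀ z ∈ Ω,
      dbar (fun w => -∑ k ∈ Finset.Icc 1 n,
        ((-1) ^ k / (k.factorial : ℂ)) * (starRingEnd ℂ) w ^ k * dbar^[k - 1] f w) z = f z) ∧
    (∫ z in Ω,
        ‖-∑ k ∈ Finset.Icc 1 n,
            ((-1) ^ k / (k.factorial : ℂ)) * (starRingEnd ℂ) z ^ k * dbar^[k - 1] f z‖ ^ 2 /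
          (1 + ‖z‖ ^ 2) ^ (2 * n) * Real.exp (-(p z))) ≤
      n * ∑ k ∈ Finset.Icc 1 n, ∫ z in Ω, ‖dbar^[k - 1] f z‖ ^ 2 * Real.exp (-(p z)) := by
  constructor
  · exact part1 Ω hΩ n hn f hreg hpoly
  · have hintk : ∀ k ∈ Finset.Icc 1 n,
        IntegrableOn (fun z => ‖dbar^[k - 1] f z‖ ^ 2 * Real.exp (-(p z))) Ω := by
      intro k hk
      rw [Finset.mem_Icc] at hk
      exact hint (k - 1) (by omega)
    have hG : IntegrableOn (fun z => (n : ℝ) * ∑ k ∈ Finset.Icc 1 n,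
        ‖dbar^[k - 1] f z‖ ^ 2 * Real.exp (-(p z))) Ω := by
      exact (integrable_finset_sum _ hintk).const_mul _
    have hmono : (∫ z in Ω,
        ‖-∑ k ∈ Finset.Icc 1 n,
            ((-1) ^ k / (k.factorial : ℂ)) * (starRingEnd ℂ) z ^ k * dbar^[k - 1] f z‖ ^ 2 /
          (1 + ‖z‖ ^ 2) ^ (2 * n) * Real.exp (-(p z)))
        ≤ ∫ z in Ω, (n : ℝ) * ∑ k ∈ Finset.Icc 1 n,
            ‖dbar^[k - 1] f z‖ ^ 2 * Real.exp (-(p z)) := by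
      apply integral_mono_of_nonneg
      · apply Filter.Eventually.of_forall
        intro z
        have h1 : (0 : ℝ) < (1 + ‖z‖ ^ 2) ^ (2 * n) := by positivity
        positivity
      · exact hG
      · exact Filter.Eventually.of_forall fun z => pointwise_bound n hn f p z
    calc _ ≤ ∫ z in Ω, (n : ℝ) * ∑ k ∈ Finset.Icc 1 n,
            ‖dbar^[k - 1] f z‖ ^ 2 * Real.exp (-(p z)) := hmono
      _ = (n : ℝ) * ∫ z in Ω, ∑ k ∈ Finset.Icc 1 n,
            ‖dbar^[k - 1] f z‖ ^ 2 * Real.exp (-(p z)) := integral_const_mul _ _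
      _ = (n : ℝ) * ∑ k ∈ Finset.Icc 1 n,
            ∫ z in Ω, ‖dbar^[k - 1] f z‖ ^ 2 * Real.exp (-(p z)) := by
          rw [integral_finset_sum _ hintk]
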